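/- arXiv:2510.15384 — 2 statements merged into one kernel-verified Lean document; each statement's English description precedes it below -/
import Mathlib

section
/- Suppose a coalitional game value function v : 2^N → ℝ is supermodular, i.e., v(S ∪ {j}) - v(S) ≥ v(R ∪ {j}) - v(R) for all R ⊆ S ⊆ N and j ∉ S. Then the core of the game is nonempty: there exists a payoff vector x : N → ℝ with Σ_{i∈N} x_i = v(N) and Σ_{i∈S} x_i ≥ v(S) for all S ⊆ N. -/
/-- a supermodular (convex) TU game has a nonempty core. -/
theorem stmt3 {ι : Type*} [Fintype ι] [DecidableEq ι]
    (v : Finset ι → ℝ) (hempty : v ∅ = 0)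
    (hsuper : ∀ R S : Finset ι, R ⊆ S → ∀ j, j ∉ S →
      v (insert j S) - v S ≥ v (insert j R) - v R) :
    ∃ x : ι → ℝ, (∑ i, x i = v Finset.univ) ∧
      ∀ S : Finset ι, ∑ i ∈ S, x i ≥ v S := by
  classical
  set e := Fintype.equivFin ι with he
  set pred : ι → Finset ι := fun i => Finset.univ.filter (fun j => e j < e i) with hpred
  set x : ι → ℝ := fun i => v (insert i (pred i)) - v (pred i) with hx
  have hnotmem : ∀ i, i ∉ pred i := by
    intro i hi
    simp [hpred] at hi
  -- key facts about a max element
  have herase_sub : ∀ (S : Finset ι) (m : ι), m ∈ S → (∀ j ∈ S, e j ≤ e m) →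
      S.erase m ⊆ pred m := by
    intro S m hm hmax j hj
    rcases Finset.mem_erase.mp hj with ⟨hne, hjS⟩
    simp only [hpred, Finset.mem_filter, Finset.mem_univ, true_and]
    exact lt_of_le_of_ne (hmax j hjS) (fun h => hne (e.injective h))
  -- inequality for all coalitions, by strong induction
  have hineq : ∀ S : Finset ι, ∑ i ∈ S, x i ≥ v S := by
    intro S
    induction S using Finset.strongInductionOn with
    | _ S ih =>
      rcases S.eq_empty_or_nonempty with rfl | hS
      · simp [hempty]
      · obtain ⟨m, hm, hmax⟩ := S.exists_max_image (fun j => e j) hS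
        have hsub := herase_sub S m hm hmax
        have hins : insert m (S.erase m) = S := Finset.insert_erase hm
        have hkey := hsuper (S.erase m) (pred m) hsub m (hnotmem m)
        rw [hins] at hkey
        have hE : ∑ i ∈ S, x i = x m + ∑ i ∈ S.erase m, x i :=
          (Finset.add_sum_erase S x hm).symm
        have hih := ih (S.erase m) (Finset.erase_ssubset hm)
        rw [hE]
        have : x m ≥ v S - v (S.erase m) := hkey
        linarith
  -- equality on downward-closed sets
  have heq : ∀ S : Finset ι, (∀ i ∈ S, ∀ j, e j < e i → j ∈ S) →
      ∑ i ∈ S, x i = v S := by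
    intro S
    induction S using Finset.strongInductionOn with
    | _ S ih =>
      intro hdc
      rcases S.eq_empty_or_nonempty with rfl | hS
      · simp [hempty]
      · obtain ⟨m, hm, hmax⟩ := S.exists_max_image (fun j => e j) hS
        have hsub := herase_sub S m hm hmax
        have hsup : pred m ⊆ S.erase m := by
          intro j hj
          simp only [hpred, Finset.mem_filter, Finset.mem_univ, true_and] at hj
          exact Finset.mem_erase.mpr ⟨fun h => absurd hj (by simp [h]), hdc m hm j hj⟩
        have hpe : S.erase m = pred m := Finset.Subset.antisymm hsub hsup
        have hins : insert m (S.erase m) = S := Finset.insert_erase hm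
        have hxm : x m = v S - v (S.erase m) := by
          rw [hx]
          simp only
          rw [← hpe, hins]
        have hdc' : ∀ i ∈ S.erase m, ∀ j, e j < e i → j ∈ S.erase m := by
          intro i hi j hji
          rcases Finset.mem_erase.mp hi with ⟨hne, hiS⟩
          refine Finset.mem_erase.mpr ⟨?_, hdc i hiS j hji⟩
          intro h; subst h
          exact absurd (lt_of_lt_of_le hji (hmax i hiS)) (lt_irrefl _)
        have hih := ih (S.erase m) (Finset.erase_ssubset hm) hdc'
        rw [← Finset.add_sum_erase S x hm, hxm, hih]
        ring
  exact ⟨x, heq Finset.univ (fun i _ j _ => Finset.mem_univ j), hineq⟩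
end

section
/- In a convex (supermodular) TU game on finite player set N with any fixed enumeration of the players, the marginal-contribution vector x_i = v(P_i ∪ {i}) - v(P_i), where P_i is the set of players preceding i in the enumeration, satisfies both efficiency Σ_{i∈N} x_i = v(N) and coalitional rationality Σ_{i∈S} x_i ≥ v(S) for all S ⊆ N. -/
/-- in a convex TU game on players Fin n (with its natural
    enumeration), the marginal-contribution vector
    x_i = v(P_i ∪ {i}) - v(P_i), P_i = predecessors of i,
    is efficient and coalitionally rational. -/
theorem stmt4 {n : ℕ} (v : Finset (Fin n) → ℝ) (hempty : v ∅ = 0)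
    (hsuper : ∀ R S : Finset (Fin n), R ⊆ S → ∀ j, j ∉ S →
      v (insert j S) - v S ≥ v (insert j R) - v R) :
    (∑ i, (v (insert i (Finset.Iio i)) - v (Finset.Iio i)) = v Finset.univ) ∧
    ∀ S : Finset (Fin n),
      ∑ i ∈ S, (v (insert i (Finset.Iio i)) - v (Finset.Iio i)) ≥ v S := by
  constructor
  · -- efficiency: telescoping
    set g : ℕ → ℝ := fun k => v (Finset.univ.filter (fun j : Fin n => (j : ℕ) < k)) with hg
    have h1 : ∀ i : Fin n, Finset.Iio i = Finset.univ.filter (fun j : Fin n => (j : ℕ) < (i : ℕ)) := by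
      intro i; ext j; simp only [Finset.mem_Iio, Finset.mem_filter, Finset.mem_univ, true_and, Fin.lt_def]
    have h2 : ∀ i : Fin n, insert i (Finset.Iio i)
        = Finset.univ.filter (fun j : Fin n => (j : ℕ) < (i : ℕ) + 1) := by
      intro i; ext j
      simp only [Finset.mem_insert, Finset.mem_Iio, Finset.mem_filter, Finset.mem_univ,
        true_and, Nat.lt_succ_iff, Fin.lt_def]
      constructor
      · rintro (rfl | h); · exact le_refl _
        · exact le_of_lt h
      · intro h
        rcases lt_or_eq_of_le h with h' | h'
        · exact Or.inr h'
        · exact Or.inl (Fin.ext h')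
    have key : ∀ i : Fin n, v (insert i (Finset.Iio i)) - v (Finset.Iio i)
        = g ((i : ℕ) + 1) - g (i : ℕ) := by
      intro i; rw [h2, h1]
    calc ∑ i : Fin n, (v (insert i (Finset.Iio i)) - v (Finset.Iio i))
        = ∑ i : Fin n, (g ((i : ℕ) + 1) - g (i : ℕ)) := by
          exact Finset.sum_congr rfl (fun i _ => key i)
      _ = ∑ k ∈ Finset.range n, (g (k + 1) - g k) :=
          Fin.sum_univ_eq_sum_range (fun k => g (k + 1) - g k) n
      _ = g n - g 0 := Finset.sum_range_sub g n
      _ = v Finset.univ := by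
          have hn : Finset.univ.filter (fun j : Fin n => (j : ℕ) < n) = Finset.univ := by
            ext j; simp [j.isLt]
          have h0 : Finset.univ.filter (fun j : Fin n => (j : ℕ) < 0) = ∅ := by
            ext j; simp
          simp [hg, hn, h0, hempty]
  · -- coalitional rationality
    intro S
    induction S using Finset.strongInduction with
    | _ S ih =>
      rcases S.eq_empty_or_nonempty with rfl | hS
      · simp [hempty]
      · set j := S.max' hS with hj
        have hjS : j ∈ S := S.max'_mem hS
        have hsub : S.erase j ⊆ Finset.Iio j := by
          intro a ha
          rw [Finset.mem_erase] at ha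
          rw [Finset.mem_Iio]
          exact lt_of_le_of_ne (S.le_max' a ha.2) ha.1
        have hnot : j ∉ Finset.Iio j := by simp
        have hstep := hsuper (S.erase j) (Finset.Iio j) hsub j hnot
        rw [Finset.insert_erase hjS] at hstep
        have hih := ih (S.erase j) (Finset.erase_ssubset hjS)
        rw [← Finset.add_sum_erase _ _ hjS]
        linarith
end
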